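/- Let R be a ring with center Z(R), and G a finite group acting by ring automorphisms on R such that the restricted action of G on Z(R) is faithful. If R is a domain, then the center of the skew group ring R ∗ G equals the fixed ring Z(R)^G. -/

import Mathlib

/-- Let `R` be a domain, `G` a finite group acting on `R` by ring automorphisms whose
restriction to the center `Z(R)` is faithful, and let `S` be the skew group ring `R ∗ G`:
`S` is free as a left `R`-module on the units `u g` (`g ∈ G`), with
`(u g) * i r = i (g • r) * (u g)`.  Then the center of `S` is exactly the image of the
fixed ring `Z(R)^G`. -/
theorem center_skewGroupRing {R S G : Type*} [Ring R] [Ring S] [Group G] [Finite G]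
    [MulSemiringAction G R]
    (hdom : ∀ a b : R, a * b = 0 → a = 0 ∨ b = 0)
    (hfaithful : ∀ g : G, (∀ z ∈ Subring.center R, g • z = z) → g = 1)
    (i : R →+* S) (u : G →* Sˣ)
    (hcross : ∀ (g : G) (r : R), (u g : S) * i r = i (g • r) * (u g : S))
    [Module R S] (hsmul : ∀ (r : R) (s : S), r • s = i r * s)
    (b : Module.Basis G R S) (hb : ∀ g : G, b g = (u g : S)) :
    ∀ s : S, s ∈ Subring.center S ↔
      ∃ z ∈ Subring.center R, (∀ g : G, g • z = z) ∧ s = i z := by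
  haveI := Fintype.ofFinite G
  have hu1 : (u 1 : S) = 1 := by rw [map_one, Units.val_one]
  have hb1 : b 1 = 1 := by rw [hb, hu1]
  have hinj : Function.Injective i := by
    intro a a' h
    have h1 : a • b 1 = a' • b 1 := by rw [hsmul, hsmul, h]
    have h2 := congrArg (fun x => b.repr x 1) h1
    simpa [Module.Basis.repr_self] using h2
  have hcoef : ∀ (d : G → R) (g : G), b.equivFun (∑ g, d g • b g) g = d g := by
    intro d g
    rw [show (∑ g, d g • b g) = b.equivFun.symm d from (Module.Basis.equivFun_symm_apply b d).symm,
      b.equivFun.apply_symm_apply]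
  intro s
  constructor
  · intro hs
    set c : G → R := fun g => b.equivFun s g with hc
    have hs_sum : s = ∑ g, c g • b g := (b.sum_equivFun s).symm
    have hcomm_r : ∀ r : R, ∀ g : G, r * c g = c g * (g • r) := by
      intro r g
      have h1 : i r * s = ∑ g, (r * c g) • b g := by
        rw [hs_sum, Finset.mul_sum]
        refine Finset.sum_congr rfl fun g _ => ?_
        rw [hsmul, hsmul, ← mul_assoc, ← map_mul]
      have h2 : s * i r = ∑ g, (c g * (g • r)) • b g := by
        rw [hs_sum, Finset.sum_mul]
        refine Finset.sum_congr rfl fun g _ => ?_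
        rw [hsmul, hsmul, hb, mul_assoc, hcross, ← mul_assoc, ← map_mul]
      have h3 : (∑ g, (r * c g) • b g) = ∑ g, (c g * (g • r)) • b g := by
        rw [← h1, ← h2, Subring.mem_center_iff.mp hs (i r)]
      have h4 := congrArg (fun x => b.equivFun x g) h3
      simpa [hcoef] using h4
    have hcg0 : ∀ g : G, g ≠ 1 → c g = 0 := by
      intro g hg
      by_contra h
      refine hg (hfaithful g fun z hz => ?_)
      have h1 : c g * (g • z) = c g * z := by
        rw [← hcomm_r z g, Subring.mem_center_iff.mp hz (c g)]
      have h2 : c g * (g • z - z) = 0 := by rw [mul_sub, h1, sub_self]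
      rcases hdom _ _ h2 with h3 | h3
      · exact absurd h3 h
      · exact sub_eq_zero.mp h3
    have hs_eq : s = i (c 1) := by
      rw [hs_sum, Finset.sum_eq_single 1 (fun g _ hg => by rw [hcg0 g hg, zero_smul])
        (fun h => absurd (Finset.mem_univ 1) h), hb1, hsmul, mul_one]
    refine ⟨c 1, Subring.mem_center_iff.mpr fun a => ?_, fun g => ?_, hs_eq⟩
    · have := hcomm_r a 1
      rwa [one_smul] at this
    · have h1 : (u g : S) * s = s * (u g : S) := Subring.mem_center_iff.mp hs _
      rw [hs_eq, hcross] at h1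
      exact hinj ((Units.mul_left_inj (u g)).mp h1)
  · rintro ⟨z, hz, hfix, rfl⟩
    have hz' := Subring.mem_center_iff.mp hz
    have hcommr : ∀ r : R, i z * i r = i r * i z := by
      intro r; rw [← map_mul, ← map_mul, hz' r]
    refine Subring.mem_center_iff.mpr fun x => ?_
    let L : S →ₗ[R] S :=
      { toFun := fun x => i z * x
        map_add' := fun a b => mul_add _ _ _
        map_smul' := fun r x => by
          simp only [RingHom.id_apply, hsmul, ← mul_assoc, hcommr] }
    let M : S →ₗ[R] S :=
      { toFun := fun x => x * i z
        map_add' := fun a b => add_mul _ _ _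
        map_smul' := fun r x => by
          simp only [RingHom.id_apply, hsmul, mul_assoc] }
    have hLM : L = M := by
      refine b.ext fun g => ?_
      show i z * b g = b g * i z
      rw [hb, hcross, hfix]
    exact congrFun (congrArg (fun f => f.toFun) hLM.symm) x
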